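/- Expected indicator bound under Gaussian initialization (Lemma 8 in the appendix): Assume d ≥ 3. Let W(0) = (W₁(0), …, W_m(0)) with W_r(0) i.i.d. N(0, (1/d)I_d), let W be any random element of (ℝ^d)^m with ‖W − W(0)‖₂ ≤ B almost surely, and let X be a random vector in ℝ^d independent of (W, W(0)) such that P(|vᵀX| ≤ ζ) ≤ c₀ζ for every unit vector v ∈ ℝ^d and every ζ > 0. Then E[ (1/m) Σ_{r=1}^m 1{|W_r(0)ᵀX| ≤ ‖W_r − W_r(0)‖₂} ] ≤ c₁ B m^{−1/2}, where c₁ = c₀ · (E_{w ~ N(0,(1/d)I_d)}[ ‖w‖₂^{−2} ])^{1/2}, and this expectation is finite because d ≥ 3. -/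

import Mathlib

noncomputable section

open MeasureTheory ProbabilityTheory Finset

/-- Euclidean space of inputs. -/
abbrev Vec (d : ℕ) := EuclideanSpace ℝ (Fin d)

/-- Weight space of a width-`m` two-layer network (ℓ² norm of the concatenation). -/
abbrev Wt (m d : ℕ) := EuclideanSpace ℝ (Fin m × Fin d)

/-- Preactivation `W_rᵀ x` of neuron `r`. -/
def npre {m d : ℕ} (W : Wt m d) (x : Vec d) (r : Fin m) : ℝ := ∑ i, W (r, i) * x i

/-- Norm `‖W_r − W_r(0)‖₂` of the `r`-th block of `W − W(0)`. -/
def bdiff {m d : ℕ} (W W0 : Wt m d) (r : Fin m) : ℝ :=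
  Real.sqrt (∑ i, (W (r, i) - W0 (r, i)) ^ 2)

/-- The law `N(0, (1/d) I_d)` on `Fin d → ℝ`, as a product of one-dimensional Gaussians. -/
def gaussPi (d : ℕ) : Measure (Fin d → ℝ) :=
  Measure.pi fun _ : Fin d => gaussianReal 0 ((d : NNReal))⁻¹

/-! ### Auxiliary lemmas -/

section Aux

open scoped NNReal ENNReal

lemma integrableOn_Icc_f :
    IntegrableOn (fun x : ℝ => (|x| ^ ((2:ℝ)/3))⁻¹) (Set.Icc (-1:ℝ) 1) volume := by
  have h1 : IntervalIntegrable (fun x : ℝ => (|x| ^ ((2:ℝ)/3))⁻¹) volume 0 1 := by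
    rw [intervalIntegrable_iff_integrableOn_Ioc_of_le (by norm_num)]
    have h := intervalIntegral.intervalIntegrable_rpow' (a := 0) (b := 1) (r := -(2/3))
      (by norm_num)
    rw [intervalIntegrable_iff_integrableOn_Ioc_of_le (by norm_num)] at h
    refine h.congr_fun (fun x hx => ?_) measurableSet_Ioc
    rw [abs_of_pos hx.1]; exact Real.rpow_neg hx.1.le _
  have h2 : IntervalIntegrable (fun x : ℝ => (|x| ^ ((2:ℝ)/3))⁻¹) volume (-1) 0 := by
    have := (IntervalIntegrable.iff_comp_neg (f := fun x : ℝ => (|x| ^ ((2:ℝ)/3))⁻¹)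
      (a := 0) (b := 1) enorm_ne_top).mp h1
    simp only [abs_neg, neg_zero] at this
    exact this.symm
  have h3 := h2.trans h1
  rw [intervalIntegrable_iff_integrableOn_Icc_of_le (by norm_num)] at h3
  exact h3

lemma integrable_rpow_inv_gauss {v : ℝ≥0} (hv : v ≠ 0) :
    Integrable (fun x : ℝ => (|x| ^ ((2:ℝ)/3))⁻¹) (gaussianReal 0 v) := by
  rw [gaussianReal_of_var_ne_zero _ hv,
    integrable_withDensity_iff (measurable_gaussianPDF _ _)
      (ae_of_all _ fun x => ENNReal.ofReal_lt_top)]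
  set C : ℝ := (Real.sqrt (2 * Real.pi * v))⁻¹ with hC
  have hvpos : (0:ℝ) < (v:ℝ) := by positivity
  have hCpos : 0 < C := by rw [hC]; refine inv_pos.2 (Real.sqrt_pos.2 (by positivity))
  have hpdf_le : ∀ x, gaussianPDFReal 0 v x ≤ C := by
    intro x
    rw [gaussianPDFReal]
    calc (Real.sqrt (2 * Real.pi * v))⁻¹ * Real.exp (-(x - 0)^2 / (2 * v))
        ≤ (Real.sqrt (2 * Real.pi * v))⁻¹ * 1 := by
          refine mul_le_mul_of_nonneg_left ?_ (by positivity)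
          rw [Real.exp_le_one_iff]
          have h2 : (0:ℝ) ≤ (x - 0)^2 := sq_nonneg _
          apply div_nonpos_of_nonpos_of_nonneg <;> nlinarith
      _ = C := by rw [mul_one]
  have hint : Integrable (fun x : ℝ =>
      C * Set.indicator (Set.Icc (-1:ℝ) 1) (fun x => (|x| ^ ((2:ℝ)/3))⁻¹) x
        + gaussianPDFReal 0 v x) volume :=
    ((integrableOn_Icc_f.integrable_indicator measurableSet_Icc).const_mul C).add
      (integrable_gaussianPDFReal 0 v)
  refine hint.mono' ?_ ?_
  · exact (((measurable_abs.pow_const _).inv).mul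
      (measurable_gaussianPDF 0 v).ennreal_toReal).aestronglyMeasurable
  · refine ae_of_all _ fun x => ?_
    have hf0 : (0:ℝ) ≤ (|x| ^ ((2:ℝ)/3))⁻¹ := by positivity
    have hpdf0 : 0 ≤ gaussianPDFReal 0 v x := gaussianPDFReal_nonneg 0 v x
    have htr : (gaussianPDF 0 v x).toReal = gaussianPDFReal 0 v x := by
      rw [gaussianPDF, ENNReal.toReal_ofReal hpdf0]
    rw [Real.norm_eq_abs, htr, abs_of_nonneg (by positivity)]
    by_cases hx : |x| ≤ 1
    · have hmem : x ∈ Set.Icc (-1:ℝ) 1 := by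
        constructor <;> [linarith [neg_abs_le x]; linarith [le_abs_self x]]
      rw [Set.indicator_of_mem hmem]
      have : (|x| ^ ((2:ℝ)/3))⁻¹ * gaussianPDFReal 0 v x ≤ (|x| ^ ((2:ℝ)/3))⁻¹ * C :=
        mul_le_mul_of_nonneg_left (hpdf_le x) hf0
      nlinarith
    · push_neg at hx
      have h1 : (|x| ^ ((2:ℝ)/3))⁻¹ ≤ 1 := by
        rw [inv_le_one_iff₀]
        right
        exact Real.one_le_rpow hx.le (by norm_num)
      have hind : 0 ≤ Set.indicator (Set.Icc (-1:ℝ) 1) (fun x => (|x| ^ ((2:ℝ)/3))⁻¹) x :=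
        Set.indicator_nonneg (fun y _ => by positivity) x
      nlinarith

/-- Type synonym for `ℝ` carrying the Gaussian `N(0, 1/d)` as volume. -/
def RG (d : ℕ) : Type := ℝ

instance : MeasurableSpace (RG d) := (inferInstance : MeasurableSpace ℝ)
instance : MeasureSpace (RG d) := ⟨gaussianReal 0 ((d : NNReal))⁻¹⟩
instance : IsProbabilityMeasure (volume : Measure (RG d)) :=
  inferInstanceAs (IsProbabilityMeasure (gaussianReal 0 ((d : NNReal))⁻¹))

lemma gaussPi_eq_volume (d : ℕ) :
    gaussPi d = (volume : Measure (Fin d → RG d)) := by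
  rw [gaussPi]; rfl

lemma integrable_prod_gaussPi {d : ℕ} (F : Fin d → ℝ → ℝ)
    (hF : ∀ i, Integrable (F i) (gaussianReal 0 ((d : NNReal))⁻¹)) :
    Integrable (fun w : Fin d → ℝ => ∏ i, F i (w i)) (gaussPi d) := by
  rw [gaussPi_eq_volume]
  exact Integrable.fintype_prod (f := fun i (x : RG d) => F i x) hF

lemma gaussPi_eval_ne_zero {d : ℕ} (hd : 0 < d) (i : Fin d) :
    ∀ᵐ w ∂(gaussPi d), w i ≠ 0 := by
  have hv : ((d : NNReal))⁻¹ ≠ 0 := by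
    have : (d : NNReal) ≠ 0 := by exact_mod_cast Nat.pos_iff_ne_zero.mp hd
    simp [this]
  have hset : {w : Fin d → ℝ | w i = 0} = Set.pi Set.univ
      (fun j => if j = i then ({0} : Set ℝ) else Set.univ) := by
    ext w
    simp only [Set.mem_setOf_eq, Set.mem_pi, Set.mem_univ, forall_true_left]
    constructor
    · intro h j; by_cases hj : j = i <;> simp [hj, h]
    · intro h; have := h i; simpa using this
  rw [ae_iff]
  have : {w : Fin d → ℝ | ¬ w i ≠ 0} = {w : Fin d → ℝ | w i = 0} := by ext; simp
  rw [this, hset, gaussPi, Measure.pi_pi]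
  have h0 : gaussianReal 0 ((d : NNReal))⁻¹ ({0} : Set ℝ) = 0 :=
    gaussianReal_absolutelyContinuous 0 hv (by simp)
  refine Finset.prod_eq_zero (Finset.mem_univ i) ?_
  simp [h0]

lemma sq_rpow_third (x : ℝ) : (x ^ 2) ^ ((3:ℝ)⁻¹) = |x| ^ ((2:ℝ)/3) := by
  rw [← sq_abs, ← Real.rpow_natCast |x| 2, ← Real.rpow_mul (abs_nonneg x)]
  norm_num

lemma integrable_inv_sum_sq {d : ℕ} (hd : 3 ≤ d) :
    Integrable (fun w : Fin d → ℝ => (∑ i, w i ^ 2)⁻¹) (gaussPi d) := by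
  have hd0 : 0 < d := by omega
  have hv : ((d : NNReal))⁻¹ ≠ 0 := by
    have : (d : NNReal) ≠ 0 := by exact_mod_cast Nat.pos_iff_ne_zero.mp hd0
    simp [this]
  set i0 : Fin d := ⟨0, by omega⟩
  set i1 : Fin d := ⟨1, by omega⟩
  set i2 : Fin d := ⟨2, by omega⟩
  set F : Fin d → ℝ → ℝ :=
    fun i x => if (i : ℕ) < 3 then (|x| ^ ((2:ℝ)/3))⁻¹ else 1 with hF
  have hFint : ∀ i, Integrable (F i) (gaussianReal 0 ((d : NNReal))⁻¹) := by
    intro i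
    by_cases h : (i : ℕ) < 3
    · simpa [hF, h] using integrable_rpow_inv_gauss hv
    · simpa [hF, h] using integrable_const (1 : ℝ)
  have hprod := (integrable_prod_gaussPi F hFint).const_mul (3⁻¹ : ℝ)
  have h01 : i0 ≠ i1 := by simp [i0, i1, Fin.ext_iff]
  have h02 : i0 ≠ i2 := by simp [i0, i2, Fin.ext_iff]
  have h12 : i1 ≠ i2 := by simp [i1, i2, Fin.ext_iff]
  have hfil : Finset.univ.filter (fun i : Fin d => (i : ℕ) < 3) = {i0, i1, i2} := by
    ext i
    simp only [Finset.mem_filter, Finset.mem_univ, true_and, Finset.mem_insert,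
      Finset.mem_singleton]
    constructor
    · intro h
      have : (i : ℕ) = 0 ∨ (i : ℕ) = 1 ∨ (i : ℕ) = 2 := by omega
      rcases this with h' | h' | h'
      · exact Or.inl (by simp [i0, Fin.ext_iff, h'])
      · exact Or.inr (Or.inl (by simp [i1, Fin.ext_iff, h']))
      · exact Or.inr (Or.inr (by simp [i2, Fin.ext_iff, h']))
    · rintro (rfl | rfl | rfl) <;> simp [i0, i1, i2]
  refine hprod.mono' ?_ ?_
  · apply Measurable.aestronglyMeasurable
    exact (Finset.measurable_sum _ fun i _ => (measurable_pi_apply i).pow_const 2).inv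
  · filter_upwards [gaussPi_eval_ne_zero hd0 i0, gaussPi_eval_ne_zero hd0 i1,
      gaussPi_eval_ne_zero hd0 i2] with w hw0 hw1 hw2
    set a := w i0 ^ 2 with hadef
    set b := w i1 ^ 2 with hbdef
    set c := w i2 ^ 2 with hcdef
    have ha : 0 < a := lt_of_le_of_ne (sq_nonneg _) (Ne.symm (pow_ne_zero 2 hw0))
    have hb : 0 < b := lt_of_le_of_ne (sq_nonneg _) (Ne.symm (pow_ne_zero 2 hw1))
    have hc : 0 < c := lt_of_le_of_ne (sq_nonneg _) (Ne.symm (pow_ne_zero 2 hw2))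
    have hsum : a + b + c ≤ ∑ i, w i ^ 2 := by
      have he : ∑ i ∈ ({i0, i1, i2} : Finset (Fin d)), w i ^ 2 = a + b + c := by
        rw [Finset.sum_insert (by simp [h01, h02]), Finset.sum_insert (by simp [h12]),
          Finset.sum_singleton]
        ring
      calc a + b + c = ∑ i ∈ ({i0, i1, i2} : Finset (Fin d)), w i ^ 2 := he.symm
        _ ≤ ∑ i, w i ^ 2 := Finset.sum_le_sum_of_subset_of_nonneg
            (Finset.subset_univ _) (fun i _ _ => sq_nonneg _)
    set P := a ^ ((3:ℝ)⁻¹) * b ^ ((3:ℝ)⁻¹) * c ^ ((3:ℝ)⁻¹) with hPdef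
    have hP : 0 < P := by positivity
    have hgm : P ≤ 3⁻¹ * a + 3⁻¹ * b + 3⁻¹ * c := by
      simpa using Real.geom_mean_le_arith_mean3_weighted (w₁ := 1/3) (w₂ := 1/3) (w₃ := 1/3)
        (by norm_num) (by norm_num) (by norm_num) ha.le hb.le hc.le (by norm_num)
    have h3P : 3 * P ≤ a + b + c := by linarith
    have hsumpos : 0 < ∑ i, w i ^ 2 := lt_of_lt_of_le (by linarith) hsum
    have inv1 : (∑ i, w i ^ 2)⁻¹ ≤ (3 * P)⁻¹ := by
      apply inv_anti₀ (by positivity)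
      linarith
    have hprodeq : ∏ i, F i (w i) = P⁻¹ := by
      have : ∏ i, F i (w i)
          = ∏ i ∈ Finset.univ.filter (fun i : Fin d => (i : ℕ) < 3), (|w i| ^ ((2:ℝ)/3))⁻¹ := by
        rw [Finset.prod_filter]
      rw [this, hfil, Finset.prod_insert (by simp [h01, h02]),
        Finset.prod_insert (by simp [h12]), Finset.prod_singleton, hPdef,
        hadef, hbdef, hcdef, sq_rpow_third, sq_rpow_third, sq_rpow_third]
      rw [mul_inv, mul_inv]
      ring
    rw [Real.norm_eq_abs, abs_of_nonneg (by positivity), hprodeq]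
    calc (∑ i, w i ^ 2)⁻¹ ≤ (3 * P)⁻¹ := inv1
      _ = 3⁻¹ * P⁻¹ := by rw [mul_inv]

lemma map_block_eq_gaussPi {Ω : Type*} [MeasurableSpace Ω] (P : Measure Ω)
    [IsProbabilityMeasure P] {m d : ℕ} (W0 : Ω → Wt m d) (hW0meas : Measurable W0)
    (hW0law : ∀ p : Fin m × Fin d,
      Measure.map (fun ω => W0 ω p) P = gaussianReal 0 ((d : NNReal))⁻¹)
    (hW0indep : iIndepFun (m := fun _ : Fin m × Fin d => (inferInstance : MeasurableSpace ℝ))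
      (fun p ω => W0 ω p) P) (r : Fin m) :
    Measure.map (fun ω i => W0 ω (r, i)) P = gaussPi d := by
  have hmeas : ∀ p : Fin m × Fin d, Measurable fun ω => W0 ω p := fun p =>
    (measurable_pi_apply p).comp ((WithLp.measurable_ofLp 2 _).comp hW0meas)
  rw [gaussPi]
  refine (Measure.pi_eq fun s hs => ?_).symm
  rw [Measure.map_apply (measurable_pi_lambda _ fun i => hmeas (r, i))
    (MeasurableSet.univ_pi hs)]
  set e : Fin d ↪ Fin m × Fin d :=
    ⟨fun i => (r, i), fun a b h => by simpa using congrArg Prod.snd h⟩ with he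
  have key := hW0indep.measure_inter_preimage_eq_mul (Finset.univ.map e)
    (sets := fun p => s p.2) (fun p _ => hs p.2)
  have hpre : (fun ω i => W0 ω (r, i)) ⁻¹' (Set.univ.pi s)
      = ⋂ p ∈ Finset.univ.map e, (fun ω => W0 ω p) ⁻¹' s p.2 := by
    ext ω
    simp only [Set.mem_preimage, Set.mem_pi, Set.mem_univ, forall_true_left, Set.mem_iInter,
      Finset.mem_map, Finset.mem_univ, true_and]
    constructor
    · intro h p hp
      obtain ⟨i, rfl⟩ := hp
      exact h i
    · intro h i; exact h (r, i) ⟨i, rfl⟩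
  rw [hpre, key, Finset.prod_map]
  refine Finset.prod_congr rfl fun i _ => ?_
  have : (e i) = (r, i) := rfl
  rw [← Measure.map_apply (hmeas (e i)) (hs (e i).2), hW0law, this]

end Aux

/-- Expected indicator bound under Gaussian initialization (Lemma 8): if `d ≥ 3`,
`W(0)` has i.i.d. `N(0, (1/d) I_d)` blocks, `‖W − W(0)‖ ≤ B` a.s., and `X` is
independent of `(W, W(0))` with `P(|vᵀX| ≤ ζ) ≤ c₀ζ` for unit vectors `v`, then
`E[(1/m) Σ_r 1{|W_r(0)ᵀX| ≤ ‖W_r − W_r(0)‖}] ≤ c₁ B m^{−1/2}` where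
`c₁ = c₀ (E_{w∼N(0,(1/d)I)}[‖w‖⁻²])^{1/2}`, the latter expectation being finite. -/
theorem stmt_5
    {m d : ℕ} (hm : 0 < m) (hd : 3 ≤ d)
    (B : ℝ) (hB : 0 < B) (c₀ : ℝ) (hc₀ : 0 < c₀)
    {Ω : Type*} [MeasurableSpace Ω] (P : Measure Ω) [IsProbabilityMeasure P]
    (W0 W : Ω → Wt m d) (X : Ω → Vec d)
    (hW0meas : Measurable W0) (hWmeas : Measurable W) (hXmeas : Measurable X)
    (hW0law : ∀ p : Fin m × Fin d,
      Measure.map (fun ω => W0 ω p) P = gaussianReal 0 ((d : NNReal))⁻¹)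
    (hW0indep : iIndepFun (m := fun _ : Fin m × Fin d => (inferInstance : MeasurableSpace ℝ))
      (fun p ω => W0 ω p) P)
    (hWclose : ∀ᵐ ω ∂P, ‖W ω - W0 ω‖ ≤ B)
    (hXindep : IndepFun (fun ω => (W ω, W0 ω)) X P)
    (hXanti : ∀ v : Vec d, ‖v‖ = 1 → ∀ ζ : ℝ, 0 < ζ →
      P {ω | |∑ i, v i * X ω i| ≤ ζ} ≤ ENNReal.ofReal (c₀ * ζ)) :
    Integrable (fun w : Fin d → ℝ => (∑ i, w i ^ 2)⁻¹) (gaussPi d)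
    ∧ ∫ ω, ((m : ℝ)⁻¹ *
          ∑ r, if |npre (W0 ω) (X ω) r| ≤ bdiff (W ω) (W0 ω) r then (1 : ℝ) else 0) ∂P
        ≤ (c₀ * Real.sqrt (∫ w, (∑ i, w i ^ 2)⁻¹ ∂gaussPi d)) * B * (Real.sqrt m)⁻¹ := by
  have hd0 : 0 < d := by omega
  have hv : ((d : NNReal))⁻¹ ≠ 0 := by
    have : (d : NNReal) ≠ 0 := by exact_mod_cast Nat.pos_iff_ne_zero.mp hd0
    simp [this]
  have hKint := integrable_inv_sum_sq (d := d) hd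
  refine ⟨hKint, ?_⟩
  set K : ℝ := ∫ w, (∑ i, w i ^ 2)⁻¹ ∂gaussPi d with hK
  have hK0 : 0 ≤ K := integral_nonneg fun w => by positivity
  -- measurability helpers
  have hW0p : ∀ p : Fin m × Fin d, Measurable fun ω => W0 ω p := fun p =>
    (measurable_pi_apply p).comp ((WithLp.measurable_ofLp 2 _).comp hW0meas)
  have hWp : ∀ p : Fin m × Fin d, Measurable fun ω => W ω p := fun p =>
    (measurable_pi_apply p).comp ((WithLp.measurable_ofLp 2 _).comp hWmeas)
  have hXi : ∀ i : Fin d, Measurable fun ω => X ω i := fun i =>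
    (measurable_pi_apply i).comp ((WithLp.measurable_ofLp 2 _).comp hXmeas)
  have hbmeas : ∀ r, Measurable fun ω => bdiff (W ω) (W0 ω) r := fun r => by
    unfold bdiff
    exact (Finset.measurable_sum _ fun i _ =>
      ((hWp (r, i)).sub (hW0p (r, i))).pow_const 2).sqrt
  have hsmeas : ∀ r, Measurable fun ω => ∑ i, W0 ω (r, i) ^ 2 := fun r =>
    Finset.measurable_sum _ fun i _ => (hW0p (r, i)).pow_const 2
  have hnmeas : ∀ r, Measurable fun ω => (Real.sqrt (∑ i, W0 ω (r, i) ^ 2))⁻¹ := fun r =>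
    ((hsmeas r).sqrt).inv
  have hnpre : ∀ r, Measurable fun ω => npre (W0 ω) (X ω) r := fun r => by
    unfold npre
    exact Finset.measurable_sum _ fun i _ => (hW0p (r, i)).mul (hXi i)
  have hAmeas : ∀ r, MeasurableSet {ω | |npre (W0 ω) (X ω) r| ≤ bdiff (W ω) (W0 ω) r} :=
    fun r => measurableSet_le (hnpre r).abs (hbmeas r)
  -- block laws
  have hlaw := fun r => map_block_eq_gaussPi P W0 hW0meas hW0law hW0indep r
  have hsinv_meas : Measurable fun w : Fin d → ℝ => (∑ i, w i ^ 2)⁻¹ :=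
    (Finset.measurable_sum _ fun i _ => (measurable_pi_apply i).pow_const 2).inv
  have hblockmeas : ∀ r, Measurable fun ω (i : Fin d) => W0 ω (r, i) := fun r =>
    measurable_pi_lambda _ fun i => hW0p (r, i)
  have hKr : ∀ r, ∫ ω, (∑ i, W0 ω (r, i) ^ 2)⁻¹ ∂P = K := by
    intro r
    rw [hK, ← hlaw r, integral_map (hblockmeas r).aemeasurable hsinv_meas.aestronglyMeasurable]
  have hIr : ∀ r, Integrable (fun ω => (∑ i, W0 ω (r, i) ^ 2)⁻¹) P := by
    intro r
    have h := hKint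
    rw [← hlaw r] at h
    exact (integrable_map_measure hsinv_meas.aestronglyMeasurable
      (hblockmeas r).aemeasurable).mp h
  have hninv_sq : ∀ r (ω : Ω), ((Real.sqrt (∑ i, W0 ω (r, i) ^ 2))⁻¹) ^ 2
      = (∑ i, W0 ω (r, i) ^ 2)⁻¹ := by
    intro r ω
    rw [inv_pow, Real.sq_sqrt (by positivity)]
  have hnL2 : ∀ r, MemLp (fun ω => (Real.sqrt (∑ i, W0 ω (r, i) ^ 2))⁻¹) 2 P := fun r =>
    (memLp_two_iff_integrable_sq (hnmeas r).aestronglyMeasurable).mpr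
      ((hIr r).congr (ae_of_all _ fun ω => (hninv_sq r ω).symm))
  have hnInt : ∀ r, Integrable (fun ω => (Real.sqrt (∑ i, W0 ω (r, i) ^ 2))⁻¹) P := fun r =>
    (hnL2 r).integrable (by norm_num)
  have hb_nonneg : ∀ r (ω : Ω), 0 ≤ bdiff (W ω) (W0 ω) r := fun r ω => Real.sqrt_nonneg _
  have hnormeq : ∀ ω, ‖W ω - W0 ω‖
      = Real.sqrt (∑ p : Fin m × Fin d, (W ω p - W0 ω p) ^ 2) := by
    intro ω
    rw [EuclideanSpace.norm_eq]
    congr 1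
    refine Finset.sum_congr rfl fun p _ => ?_
    rw [PiLp.sub_apply, Real.norm_eq_abs, sq_abs]
  have hb_le : ∀ᵐ ω ∂P, ∀ r, bdiff (W ω) (W0 ω) r ≤ B := by
    filter_upwards [hWclose] with ω hω r
    have hnorm := hnormeq ω
    have hsub : ∑ i, (W ω (r, i) - W0 ω (r, i)) ^ 2
        ≤ ∑ p : Fin m × Fin d, (W ω p - W0 ω p) ^ 2 := by
      rw [Fintype.sum_prod_type]
      exact Finset.single_le_sum (f := fun a => ∑ i, (W ω (a, i) - W0 ω (a, i)) ^ 2)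
        (fun a _ => Finset.sum_nonneg fun i _ => sq_nonneg _) (Finset.mem_univ r)
    calc bdiff (W ω) (W0 ω) r ≤ Real.sqrt (∑ p : Fin m × Fin d, (W ω p - W0 ω p) ^ 2) :=
          Real.sqrt_le_sqrt hsub
      _ = ‖W ω - W0 ω‖ := hnorm.symm
      _ ≤ B := hω
  have hb2Int : ∀ r, Integrable (fun ω => bdiff (W ω) (W0 ω) r ^ 2) P := by
    intro r
    refine (integrable_const (B ^ 2)).mono' ((hbmeas r).pow_const 2).aestronglyMeasurable ?_
    filter_upwards [hb_le] with ω hω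
    rw [Real.norm_eq_abs, abs_of_nonneg (sq_nonneg _)]
    exact pow_le_pow_left₀ (hb_nonneg r ω) (hω r) 2
  have hbL2 : ∀ r, MemLp (fun ω => bdiff (W ω) (W0 ω) r) 2 P := fun r =>
    (memLp_two_iff_integrable_sq (hbmeas r).aestronglyMeasurable).mpr (hb2Int r)
  have hbnInt : ∀ r, Integrable
      (fun ω => bdiff (W ω) (W0 ω) r * (Real.sqrt (∑ i, W0 ω (r, i) ^ 2))⁻¹) P := by
    intro r
    refine (hnInt r).bdd_mul (c := B) (hbmeas r).aestronglyMeasurable ?_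
    filter_upwards [hb_le] with ω hω
    rw [Real.norm_eq_abs, abs_of_nonneg (hb_nonneg r ω)]
    exact hω r
  -- Step A
  -- independence: joint law is a product
  have hpairmeas : Measurable fun ω => (W ω, W0 ω) := hWmeas.prodMk hW0meas
  have hprodlaw := (indepFun_iff_map_prod_eq_prod_map_map hpairmeas.aemeasurable
    hXmeas.aemeasurable).mp hXindep
  set μ := Measure.map (fun ω => (W ω, W0 ω)) P with hμ
  set ν := Measure.map X P with hν
  haveI : IsProbabilityMeasure ν := Measure.isProbabilityMeasure_map hXmeas.aemeasurable
  haveI : IsProbabilityMeasure μ := Measure.isProbabilityMeasure_map hpairmeas.aemeasurable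
  have hXanti' : ∀ v : Vec d, ‖v‖ = 1 → ∀ ζ : ℝ, 0 < ζ →
      ν {x : Vec d | |∑ i, v i * x i| ≤ ζ} ≤ ENNReal.ofReal (c₀ * ζ) := by
    intro v hvn ζ hζ
    have hmeasset : MeasurableSet {x : Vec d | |∑ i, v i * x i| ≤ ζ} :=
      measurableSet_le (Finset.measurable_sum _ fun i _ =>
        ((measurable_pi_apply i).comp (WithLp.measurable_ofLp 2 (Fin d → ℝ))).const_mul (v i)).abs measurable_const
    rw [hν, Measure.map_apply hXmeas hmeasset]
    exact hXanti v hvn ζ hζ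
  have stepA : ∀ r : Fin m,
      (P {ω | |npre (W0 ω) (X ω) r| ≤ bdiff (W ω) (W0 ω) r}).toReal
      ≤ c₀ * ∫ ω, bdiff (W ω) (W0 ω) r * (Real.sqrt (∑ i, W0 ω (r, i) ^ 2))⁻¹ ∂P := by
    intro r
    set g : Wt m d × Wt m d → ℝ :=
      fun p => bdiff p.1 p.2 r * (Real.sqrt (∑ i, p.2 (r, i) ^ 2))⁻¹ with hgdef
    have hgmeas : Measurable g := by
      apply Measurable.mul
      · unfold bdiff
        exact (Finset.measurable_sum _ fun i _ =>
          (((measurable_pi_apply (r, i)).comp ((WithLp.measurable_ofLp 2 _).comp measurable_fst)).sub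
            ((measurable_pi_apply (r, i)).comp ((WithLp.measurable_ofLp 2 _).comp measurable_snd))).pow_const 2).sqrt
      · exact ((Finset.measurable_sum _ fun i _ =>
          ((measurable_pi_apply (r, i)).comp ((WithLp.measurable_ofLp 2 _).comp measurable_snd)).pow_const 2).sqrt).inv
    have hgnn : ∀ p, 0 ≤ g p := fun p =>
      mul_nonneg (Real.sqrt_nonneg _) (inv_nonneg.2 (Real.sqrt_nonneg _))
    set T : Set ((Wt m d × Wt m d) × Vec d) :=
      {q | |∑ i, q.1.2 (r, i) * q.2 i| ≤ bdiff q.1.1 q.1.2 r} with hTdef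
    have hTmeas : MeasurableSet T := by
      apply measurableSet_le
      · exact (Finset.measurable_sum _ fun i _ =>
          (((measurable_pi_apply (r, i)).comp ((WithLp.measurable_ofLp 2 _).comp (measurable_snd.comp measurable_fst))).mul
            ((measurable_pi_apply i).comp ((WithLp.measurable_ofLp 2 _).comp measurable_snd)))).abs
      · unfold bdiff
        exact (Finset.measurable_sum _ fun i _ =>
          (((measurable_pi_apply (r, i)).comp ((WithLp.measurable_ofLp 2 _).comp (measurable_fst.comp measurable_fst))).sub
            ((measurable_pi_apply (r, i)).comp ((WithLp.measurable_ofLp 2 _).comp (measurable_snd.comp measurable_fst)))).pow_const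
              2).sqrt
    have hPA : P {ω | |npre (W0 ω) (X ω) r| ≤ bdiff (W ω) (W0 ω) r} = (μ.prod ν) T := by
      rw [← hprodlaw, Measure.map_apply (hpairmeas.prodMk hXmeas) hTmeas]
      rfl
    -- a.e. the block of W0 is nonzero
    have i₀ : Fin d := ⟨0, hd0⟩
    have hμae : ∀ᵐ p ∂μ, p.2 (r, i₀) ≠ 0 := by
      have hs0 : MeasurableSet {p : Wt m d × Wt m d | ¬ p.2 (r, i₀) ≠ 0} := by
        simp only [not_not]
        exact ((measurable_pi_apply (r, i₀)).comp ((WithLp.measurable_ofLp 2 _).comp measurable_snd)) (measurableSet_singleton 0)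
      rw [ae_iff, hμ, Measure.map_apply hpairmeas hs0]
      have : (fun ω => (W ω, W0 ω)) ⁻¹' {p : Wt m d × Wt m d | ¬ p.2 (r, i₀) ≠ 0}
          = (fun ω => W0 ω (r, i₀)) ⁻¹' {0} := by
        ext ω; simp
      rw [this, ← Measure.map_apply (hW0p (r, i₀)) (measurableSet_singleton 0),
        hW0law (r, i₀)]
      exact gaussianReal_absolutelyContinuous 0 hv (by simp)
    -- pointwise slice bound
    have hbound : ∀ᵐ p ∂μ, ν (Prod.mk p ⁻¹' T) ≤ ENNReal.ofReal (c₀ * g p) := by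
      filter_upwards [hμae] with p hp
      set s := ∑ i, p.2 (r, i) ^ 2 with hs
      have hspos : 0 < s := by
        have h1 : (p.2 (r, i₀)) ^ 2 ≤ s :=
          Finset.single_le_sum (f := fun i => p.2 (r, i) ^ 2)
            (fun i _ => sq_nonneg _) (Finset.mem_univ _)
        have h2 : 0 < (p.2 (r, i₀)) ^ 2 :=
          lt_of_le_of_ne (sq_nonneg _) (Ne.symm (pow_ne_zero 2 hp))
        linarith
      have hnn : 0 < Real.sqrt s := Real.sqrt_pos.2 hspos
      set bb := bdiff p.1 p.2 r with hbbdef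
      have hbb0 : 0 ≤ bb := Real.sqrt_nonneg _
      set v : Vec d := WithLp.toLp 2 (fun i => p.2 (r, i) / Real.sqrt s : Fin d → ℝ) with hvdef
      have hvnorm : ‖v‖ = 1 := by
        rw [EuclideanSpace.norm_eq]
        have hterm : ∀ i : Fin d, ‖v i‖ ^ 2 = p.2 (r, i) ^ 2 / s := by
          intro i
          rw [hvdef]
          simp only [Real.norm_eq_abs]
          rw [sq_abs, div_pow, Real.sq_sqrt hspos.le]
        have : ∑ i, ‖v i‖ ^ 2 = 1 := by
          simp_rw [hterm]
          rw [← Finset.sum_div, ← hs, div_self hspos.ne']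
        rw [this, Real.sqrt_one]
      have hsetζ : ∀ ζ : ℝ, {x : Vec d | |∑ i, p.2 (r, i) * x i| ≤ ζ * Real.sqrt s}
          = {x : Vec d | |∑ i, v i * x i| ≤ ζ} := by
        intro ζ
        ext x
        have hsum : ∑ i, v i * x i = (∑ i, p.2 (r, i) * x i) / Real.sqrt s := by
          rw [Finset.sum_div]
          refine Finset.sum_congr rfl fun i _ => ?_
          rw [hvdef]
          exact div_mul_eq_mul_div _ _ _
        simp only [Set.mem_setOf_eq, hsum, abs_div, abs_of_pos hnn]
        rw [div_le_iff₀ hnn]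
      have hslice : Prod.mk p ⁻¹' T = {x : Vec d | |∑ i, p.2 (r, i) * x i| ≤ bb} := rfl
      have hgval : g p = bb * (Real.sqrt s)⁻¹ := rfl
      rcases eq_or_lt_of_le hbb0 with hbbz | hbbpos
      · -- bb = 0 : the slice has measure zero
        have hz : ν (Prod.mk p ⁻¹' T) = 0 := by
          refine le_antisymm ?_ (by simp)
          refine ENNReal.le_of_forall_pos_le_add fun ε hε _ => ?_
          have hεc : 0 < (ε : ℝ) / c₀ := div_pos hε hc₀
          have hsub : Prod.mk p ⁻¹' T ⊆ {x : Vec d | |∑ i, v i * x i| ≤ (ε : ℝ) / c₀} := by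
            rw [← hsetζ]
            intro x hx
            rw [hslice] at hx
            have : (0:ℝ) < (ε : ℝ) / c₀ * Real.sqrt s := mul_pos hεc hnn
            simp only [Set.mem_setOf_eq]
            calc |∑ i, p.2 (r, i) * x i| ≤ bb := hx
              _ ≤ (ε : ℝ) / c₀ * Real.sqrt s := by rw [← hbbz]; exact this.le
          calc ν (Prod.mk p ⁻¹' T) ≤ ν {x : Vec d | |∑ i, v i * x i| ≤ (ε : ℝ) / c₀} :=
                measure_mono hsub
            _ ≤ ENNReal.ofReal (c₀ * ((ε : ℝ) / c₀)) := hXanti' v hvnorm _ hεc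
            _ = ENNReal.ofReal (ε : ℝ) := by rw [mul_div_cancel₀ _ hc₀.ne']
            _ ≤ 0 + ε := by rw [zero_add, ENNReal.ofReal_coe_nnreal]
        rw [hz]
        simp
      · -- bb > 0
        have hζ : 0 < bb / Real.sqrt s := div_pos hbbpos hnn
        have hset2 : Prod.mk p ⁻¹' T = {x : Vec d | |∑ i, v i * x i| ≤ bb / Real.sqrt s} := by
          rw [hslice, ← hsetζ, div_mul_cancel₀ _ hnn.ne']
        calc ν (Prod.mk p ⁻¹' T)
            ≤ ENNReal.ofReal (c₀ * (bb / Real.sqrt s)) := by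
              rw [hset2]; exact hXanti' v hvnorm _ hζ
          _ = ENNReal.ofReal (c₀ * g p) := by rw [hgval, div_eq_mul_inv]
    -- put it together
    have hgint : Integrable (fun ω => g (W ω, W0 ω)) P := hbnInt r
    have hgPnn : 0 ≤ᵐ[P] fun ω => c₀ * g (W ω, W0 ω) :=
      ae_of_all _ fun ω => mul_nonneg hc₀.le (hgnn _)
    have hlint : ∫⁻ p, ENNReal.ofReal (c₀ * g p) ∂μ
        = ENNReal.ofReal (∫ ω, c₀ * g (W ω, W0 ω) ∂P) := by
      rw [hμ, lintegral_map ((hgmeas.const_mul c₀).ennreal_ofReal) hpairmeas,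
        ofReal_integral_eq_lintegral_ofReal (hgint.const_mul c₀) hgPnn]
    have hne : ∫⁻ p, ENNReal.ofReal (c₀ * g p) ∂μ ≠ ⊤ := by
      rw [hlint]; exact ENNReal.ofReal_ne_top
    have hmain : (P {ω | |npre (W0 ω) (X ω) r| ≤ bdiff (W ω) (W0 ω) r}).toReal
        ≤ (∫⁻ p, ENNReal.ofReal (c₀ * g p) ∂μ).toReal := by
      apply ENNReal.toReal_mono hne
      rw [hPA, Measure.prod_apply hTmeas]
      exact lintegral_mono_ae hbound
    rw [hlint, ENNReal.toReal_ofReal (integral_nonneg fun ω =>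
      mul_nonneg hc₀.le (hgnn _))] at hmain
    rw [integral_const_mul] at hmain
    exact hmain
  -- Step B
  have stepB : ∀ r : Fin m,
      ∫ ω, bdiff (W ω) (W0 ω) r * (Real.sqrt (∑ i, W0 ω (r, i) ^ 2))⁻¹ ∂P
      ≤ Real.sqrt (∫ ω, bdiff (W ω) (W0 ω) r ^ 2 ∂P) * Real.sqrt K := by
    intro r
    have hconj : (2:ℝ).HolderConjugate 2 := Real.HolderConjugate.two_two
    have h2 : ENNReal.ofReal (2:ℝ) = 2 := by
      rw [ENNReal.ofReal_ofNat]
    have hbM : MemLp (fun ω => bdiff (W ω) (W0 ω) r) (ENNReal.ofReal (2:ℝ)) P := by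
      rw [h2]; exact hbL2 r
    have hnM : MemLp (fun ω => (Real.sqrt (∑ i, W0 ω (r, i) ^ 2))⁻¹)
        (ENNReal.ofReal (2:ℝ)) P := by
      rw [h2]; exact hnL2 r
    have hCS := integral_mul_le_Lp_mul_Lq_of_nonneg hconj
      (ae_of_all _ fun ω => hb_nonneg r ω)
      (ae_of_all _ fun ω => inv_nonneg.2 (Real.sqrt_nonneg _)) hbM hnM
    have e1 : ∫ ω, bdiff (W ω) (W0 ω) r ^ (2:ℝ) ∂P
        = ∫ ω, bdiff (W ω) (W0 ω) r ^ 2 ∂P := by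
      simp only [Real.rpow_two]
    have e2 : ∫ ω, ((Real.sqrt (∑ i, W0 ω (r, i) ^ 2))⁻¹) ^ (2:ℝ) ∂P = K := by
      simp only [Real.rpow_two, hninv_sq r]
      exact hKr r
    rw [e1, e2, ← Real.sqrt_eq_rpow, ← Real.sqrt_eq_rpow] at hCS
    exact hCS
  -- Step C
  have stepC : ∑ r : Fin m, Real.sqrt (∫ ω, bdiff (W ω) (W0 ω) r ^ 2 ∂P)
      ≤ Real.sqrt m * B := by
    have ha0 : ∀ r : Fin m, 0 ≤ ∫ ω, bdiff (W ω) (W0 ω) r ^ 2 ∂P := fun r =>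
      integral_nonneg fun ω => sq_nonneg _
    have hsum_eq : ∑ r : Fin m, ∫ ω, bdiff (W ω) (W0 ω) r ^ 2 ∂P
        = ∫ ω, ∑ r : Fin m, bdiff (W ω) (W0 ω) r ^ 2 ∂P :=
      (integral_finset_sum _ fun r _ => hb2Int r).symm
    have hae : ∀ᵐ ω ∂P, ∑ r : Fin m, bdiff (W ω) (W0 ω) r ^ 2 ≤ B ^ 2 := by
      filter_upwards [hWclose] with ω hω
      have h1 : ∑ r : Fin m, bdiff (W ω) (W0 ω) r ^ 2
          = ∑ p : Fin m × Fin d, (W ω p - W0 ω p) ^ 2 := by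
        rw [Fintype.sum_prod_type]
        refine Finset.sum_congr rfl fun r _ => ?_
        rw [bdiff, Real.sq_sqrt (Finset.sum_nonneg fun i _ => sq_nonneg _)]
      have h2 : ∑ p : Fin m × Fin d, (W ω p - W0 ω p) ^ 2 = ‖W ω - W0 ω‖ ^ 2 := by
        rw [hnormeq ω, Real.sq_sqrt (Finset.sum_nonneg fun p _ => sq_nonneg _)]
      rw [h1, h2]
      exact pow_le_pow_left₀ (norm_nonneg _) hω 2
    have hintle : ∫ ω, ∑ r : Fin m, bdiff (W ω) (W0 ω) r ^ 2 ∂P ≤ B ^ 2 := by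
      have := integral_mono_ae (integrable_finset_sum _ fun r _ => hb2Int r)
        (integrable_const (B ^ 2)) hae
      simpa using this
    have hsumle2 : ∑ r : Fin m, ∫ ω, bdiff (W ω) (W0 ω) r ^ 2 ∂P ≤ B ^ 2 :=
      hsum_eq ▸ hintle
    have hcs : (∑ r : Fin m, Real.sqrt (∫ ω, bdiff (W ω) (W0 ω) r ^ 2 ∂P)) ^ 2
        ≤ (m : ℝ) * ∑ r : Fin m, (Real.sqrt (∫ ω, bdiff (W ω) (W0 ω) r ^ 2 ∂P)) ^ 2 := by
      have := sq_sum_le_card_mul_sum_sq (s := (Finset.univ : Finset (Fin m)))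
        (f := fun r => Real.sqrt (∫ ω, bdiff (W ω) (W0 ω) r ^ 2 ∂P))
      simpa using this
    have hsq : ∑ r : Fin m, (Real.sqrt (∫ ω, bdiff (W ω) (W0 ω) r ^ 2 ∂P)) ^ 2
        = ∑ r : Fin m, ∫ ω, bdiff (W ω) (W0 ω) r ^ 2 ∂P :=
      Finset.sum_congr rfl fun r _ => Real.sq_sqrt (ha0 r)
    have hmnn : (0:ℝ) ≤ (m:ℝ) := Nat.cast_nonneg m
    calc ∑ r : Fin m, Real.sqrt (∫ ω, bdiff (W ω) (W0 ω) r ^ 2 ∂P)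
        = Real.sqrt ((∑ r : Fin m, Real.sqrt (∫ ω, bdiff (W ω) (W0 ω) r ^ 2 ∂P)) ^ 2) :=
          (Real.sqrt_sq (Finset.sum_nonneg fun r _ => Real.sqrt_nonneg _)).symm
      _ ≤ Real.sqrt ((m : ℝ) * B ^ 2) := by
          refine Real.sqrt_le_sqrt ?_
          refine hcs.trans ?_
          rw [hsq]
          exact mul_le_mul_of_nonneg_left hsumle2 hmnn
      _ = Real.sqrt m * B := by
          rw [Real.sqrt_mul hmnn, Real.sqrt_sq hB.le]
  -- assemble
  have hLHS : ∫ ω, ((m : ℝ)⁻¹ *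
        ∑ r, if |npre (W0 ω) (X ω) r| ≤ bdiff (W ω) (W0 ω) r then (1 : ℝ) else 0) ∂P
      = (m : ℝ)⁻¹ * ∑ r : Fin m,
        (P {ω | |npre (W0 ω) (X ω) r| ≤ bdiff (W ω) (W0 ω) r}).toReal := by
    rw [integral_const_mul]
    congr 1
    rw [integral_finset_sum]
    · refine Finset.sum_congr rfl fun r _ => ?_
      have hfun : (fun ω => if |npre (W0 ω) (X ω) r| ≤ bdiff (W ω) (W0 ω) r then (1:ℝ) else 0)
          = Set.indicator {ω | |npre (W0 ω) (X ω) r| ≤ bdiff (W ω) (W0 ω) r} (fun _ => (1:ℝ)) := by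
        funext ω
        rw [Set.indicator_apply]
        rfl
      rw [hfun, integral_indicator_const _ (hAmeas r), smul_eq_mul, mul_one]; rfl
    · intro r _
      have hfun : (fun ω => if |npre (W0 ω) (X ω) r| ≤ bdiff (W ω) (W0 ω) r then (1:ℝ) else 0)
          = Set.indicator {ω | |npre (W0 ω) (X ω) r| ≤ bdiff (W ω) (W0 ω) r} (fun _ => (1:ℝ)) := by
        funext ω
        rw [Set.indicator_apply]
        rfl
      rw [hfun]
      exact (integrable_const (1:ℝ)).indicator (hAmeas r)
  rw [hLHS]
  have hterm : ∀ r : Fin m,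
      (P {ω | |npre (W0 ω) (X ω) r| ≤ bdiff (W ω) (W0 ω) r}).toReal
      ≤ (c₀ * Real.sqrt K) * Real.sqrt (∫ ω, bdiff (W ω) (W0 ω) r ^ 2 ∂P) := by
    intro r
    refine (stepA r).trans ?_
    calc c₀ * ∫ ω, bdiff (W ω) (W0 ω) r * (Real.sqrt (∑ i, W0 ω (r, i) ^ 2))⁻¹ ∂P
        ≤ c₀ * (Real.sqrt (∫ ω, bdiff (W ω) (W0 ω) r ^ 2 ∂P) * Real.sqrt K) :=
          mul_le_mul_of_nonneg_left (stepB r) hc₀.le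
      _ = (c₀ * Real.sqrt K) * Real.sqrt (∫ ω, bdiff (W ω) (W0 ω) r ^ 2 ∂P) := by ring
  have hsumle : ∑ r : Fin m, (P {ω | |npre (W0 ω) (X ω) r| ≤ bdiff (W ω) (W0 ω) r}).toReal
      ≤ (c₀ * Real.sqrt K) * (Real.sqrt m * B) := by
    calc ∑ r : Fin m, (P {ω | |npre (W0 ω) (X ω) r| ≤ bdiff (W ω) (W0 ω) r}).toReal
        ≤ ∑ r : Fin m, (c₀ * Real.sqrt K) * Real.sqrt (∫ ω, bdiff (W ω) (W0 ω) r ^ 2 ∂P) :=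
          Finset.sum_le_sum fun r _ => hterm r
      _ = (c₀ * Real.sqrt K) * ∑ r : Fin m, Real.sqrt (∫ ω, bdiff (W ω) (W0 ω) r ^ 2 ∂P) := by
          rw [Finset.mul_sum]
      _ ≤ (c₀ * Real.sqrt K) * (Real.sqrt m * B) :=
          mul_le_mul_of_nonneg_left stepC (by positivity)
  have hmpos : (0:ℝ) < m := by exact_mod_cast hm
  have hms : Real.sqrt m ≠ 0 := by positivity
  calc (m : ℝ)⁻¹ * ∑ r : Fin m, (P {ω | |npre (W0 ω) (X ω) r| ≤ bdiff (W ω) (W0 ω) r}).toReal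
      ≤ (m : ℝ)⁻¹ * ((c₀ * Real.sqrt K) * (Real.sqrt m * B)) :=
        mul_le_mul_of_nonneg_left hsumle (by positivity)
    _ = (c₀ * Real.sqrt K) * B * ((m:ℝ)⁻¹ * Real.sqrt m) := by ring
    _ = (c₀ * Real.sqrt K) * B * (Real.sqrt m)⁻¹ := by
        congr 1
        have hss : Real.sqrt m * Real.sqrt m = (m:ℝ) := Real.mul_self_sqrt hmpos.le
        have h1 : Real.sqrt m * ((m:ℝ)⁻¹ * Real.sqrt m) = 1 := by
          rw [show Real.sqrt m * ((m:ℝ)⁻¹ * Real.sqrt m)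
              = (Real.sqrt m * Real.sqrt m) * (m:ℝ)⁻¹ by ring, hss,
            mul_inv_cancel₀ hmpos.ne']
        exact (inv_eq_of_mul_eq_one_right h1).symm
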